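/- Let f : X → X be a surjective equicontinuous continuous map of a compact metric space. Then f is a homeomorphism and f^{-1} is equicontinuous. -/

import Mathlib

open Filter Topology Metric Set

/-- A periodic structure: a sequence of positive integers with `m j ∣ m (j+1)` and `m j → ∞`. -/
structure PeriodicStructure where
  m : ℕ → ℕ
  pos : ∀ j, 0 < m j
  dvd : ∀ j, m j ∣ m (j + 1)
  tendsto : Filter.Tendsto m Filter.atTop Filter.atTop

/-- The odometer space `X_m` of a periodic structure. -/
def PeriodicStructure.space (p : PeriodicStructure) : Type :=
  {x : ℕ → ℕ // ∀ j, x j < p.m j ∧ x (j + 1) % p.m j = x j}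

instance (p : PeriodicStructure) : TopologicalSpace p.space :=
  inferInstanceAs (TopologicalSpace
    {x : ℕ → ℕ // ∀ j, x j < p.m j ∧ x (j + 1) % p.m j = x j})

/-- The odometer map `g_m` (adding 1 coordinatewise mod `m j`). -/
def PeriodicStructure.step (p : PeriodicStructure) (x : p.space) : p.space :=
  ⟨fun j => (x.1 j + 1) % p.m j, by
    intro j
    refine ⟨Nat.mod_lt _ (p.pos j), ?_⟩
    show (x.1 (j + 1) + 1) % p.m (j + 1) % p.m j = (x.1 j + 1) % p.m j
    rw [Nat.mod_mod_of_dvd _ (p.dvd j), ← (x.2 j).2, Nat.add_mod]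
    exact Nat.add_mod_mod _ _ _⟩

/-- `S` is an odometer for `f`: `f` restricted to `S` is topologically conjugate to
an odometer `g_m : X_m → X_m`. -/
def IsOdometer {X : Type*} [TopologicalSpace X] (f : X → X) (S : Set X) : Prop :=
  ∃ p : PeriodicStructure, ∃ h : p.space ≃ₜ S,
    ∀ z : p.space, f ((h z : X)) = ((h (p.step z) : X))

/-- `S` is a periodic orbit of `f`. -/
def IsPeriodicOrbit {X : Type*} (f : X → X) (S : Set X) : Prop :=
  ∃ x ∈ S, ∃ i : ℕ, 0 < i ∧ f^[i] x = x ∧ S = {y | ∃ j < i, f^[j] x = y}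

/-- The ω-limit set of a sequence of points. -/
def omegaLimitSeq {X : Type*} [TopologicalSpace X] (x : ℕ → X) : Set X :=
  {y | ∃ φ : ℕ → ℕ, StrictMono φ ∧
    Filter.Tendsto (fun j => x (φ j)) Filter.atTop (nhds y)}

/-- The ω-limit set `ω(x, f)` of a point. -/
def omegaLimitPt {X : Type*} [TopologicalSpace X] (f : X → X) (x : X) : Set X :=
  omegaLimitSeq fun i => f^[i] x

/-- `M` is a minimal set for `f`. -/
def IsMinimalSet {X : Type*} [TopologicalSpace X] (f : X → X) (M : Set X) : Prop :=
  M.Nonempty ∧ IsClosed M ∧ Set.MapsTo f M M ∧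
    ∀ S ⊆ M, IsClosed S → Set.MapsTo f S S → S = ∅ ∨ S = M

/-- `x` is a minimal point for `f`. -/
def IsMinimalPoint {X : Type*} [TopologicalSpace X] (f : X → X) (x : X) : Prop :=
  IsMinimalSet f (closure (Set.range fun i => f^[i] x))

/-- `x` is a regularly recurrent point for `f`. -/
def RegularlyRecurrent {X : Type*} [PseudoMetricSpace X] (f : X → X) (x : X) : Prop :=
  ∀ ε > 0, ∃ n : ℕ, 0 < n ∧ ∀ k : ℕ, dist x (f^[k * n] x) ≤ ε

/-- `f` has the shadowing property. -/
def ShadowingProperty {X : Type*} [PseudoMetricSpace X] (f : X → X) : Prop :=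
  ∀ ε > 0, ∃ δ > 0, ∀ ξ : ℕ → X,
    (∀ i, dist (f (ξ i)) (ξ (i + 1)) ≤ δ) → ∃ y, ∀ i, dist (f^[i] y) (ξ i) ≤ ε

set_option linter.unusedSectionVars false

noncomputable def Dm {X : Type*} [MetricSpace X] (f : X → X) (x y : X) : ℝ :=
  ⨆ i, dist (f^[i] x) (f^[i] y)

section
variable {X : Type*} [MetricSpace X] [CompactSpace X] (f : X → X)

lemma Dm_bdd (x y : X) : BddAbove (Set.range fun i : ℕ => dist (f^[i] x) (f^[i] y)) := by
  obtain ⟨C, hC⟩ := Metric.isBounded_iff.1 (isCompact_univ : IsCompact (Set.univ : Set X)).isBounded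
  exact ⟨C, by rintro _ ⟨i, rfl⟩; exact hC (mem_univ _) (mem_univ _)⟩

lemma dist_le_Dm (x y : X) : dist x y ≤ Dm f x y := by
  have := le_ciSup (Dm_bdd f x y) 0
  simpa [Dm] using this

lemma Dm_step (x y : X) : Dm f (f x) (f y) ≤ Dm f x y := by
  refine ciSup_le fun i => ?_
  rw [← Function.iterate_succ_apply, ← Function.iterate_succ_apply]
  exact le_ciSup (Dm_bdd f x y) (i + 1)

lemma Dm_iter (k : ℕ) (x y : X) : Dm f (f^[k] x) (f^[k] y) ≤ Dm f x y := by
  induction k with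
  | zero => simp
  | succ n ih =>
    rw [Function.iterate_succ_apply', Function.iterate_succ_apply']
    exact (Dm_step f _ _).trans ih

lemma Dm_self (x : X) : Dm f x x = 0 := by
  simp [Dm]

lemma Dm_comm (x y : X) : Dm f x y = Dm f y x := by
  simp [Dm, dist_comm]

lemma Dm_triangle (x y z : X) : Dm f x z ≤ Dm f x y + Dm f y z := by
  refine ciSup_le fun i => (dist_triangle _ (f^[i] y) _).trans ?_
  exact add_le_add (le_ciSup (Dm_bdd f x y) i) (le_ciSup (Dm_bdd f y z) i)
end

section
variable {X : Type*} [MetricSpace X] [CompactSpace X] {f : X → X}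

lemma Dm_isom (hsurj : Function.Surjective f)
    (heq : ∀ ε > (0 : ℝ), ∃ δ > (0 : ℝ), ∀ x y : X, dist x y ≤ δ →
      ∀ i : ℕ, dist (f^[i] x) (f^[i] y) ≤ ε) (x y : X) :
    Dm f (f x) (f y) = Dm f x y := by
  refine le_antisymm (Dm_step f x y) ?_
  refine le_of_forall_pos_le_add fun ε hε => ?_
  obtain ⟨δ, hδ, hδ'⟩ := heq (ε / 2) (by linarith)
  -- small-d implies small-Dm
  have hDd : ∀ a b : X, dist a b ≤ δ → Dm f a b ≤ ε / 2 := fun a b h =>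
    ciSup_le fun i => hδ' a b h i
  -- backward orbits
  choose u hu using fun n : ℕ => (hsurj.iterate n) x
  choose v hv using fun n : ℕ => (hsurj.iterate n) y
  obtain ⟨L, -, φ, hφ, hconv⟩ := (isCompact_univ : IsCompact (Set.univ : Set (X × X))).tendsto_subseq
    (x := fun n => ((u n, v n) : X × X)) (fun n => Set.mem_univ _)
  obtain ⟨N, hN⟩ := (Metric.tendsto_atTop.1 hconv) (δ / 2) (by linarith)
  set n := φ N
  set m := φ (N + 1)
  have hnm : n < m := hφ (Nat.lt_succ_self N)
  have hclose : dist ((u n, v n) : X × X) (u m, v m) ≤ δ := by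
    calc dist ((u n, v n) : X × X) (u m, v m)
        ≤ dist ((u n, v n) : X × X) L + dist ((u m, v m) : X × X) L := dist_triangle_right _ _ _
      _ ≤ δ / 2 + δ / 2 := add_le_add (le_of_lt (hN N le_rfl)) (le_of_lt (hN (N + 1) (Nat.le_succ N)))
      _ = δ := by ring
  have hcu : dist (u n) (u m) ≤ δ := le_trans (by rw [Prod.dist_eq]; exact le_max_left _ _) hclose
  have hcv : dist (v n) (v m) ≤ δ := le_trans (by rw [Prod.dist_eq]; exact le_max_right _ _) hclose
  set a := f^[n] (u m)
  set b := f^[n] (v m)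
  have hxa : Dm f x a ≤ ε / 2 := by
    have := Dm_iter f n (u n) (u m)
    rw [hu n] at this
    exact this.trans (hDd _ _ hcu)
  have hyb : Dm f y b ≤ ε / 2 := by
    have := Dm_iter f n (v n) (v m)
    rw [hv n] at this
    exact this.trans (hDd _ _ hcv)
  obtain ⟨k, hk⟩ : ∃ k, m = (k + 1) + n := ⟨m - n - 1, by omega⟩
  have hfa : f^[k] (f a) = x := by
    have h1 : f^[k] (f a) = f^[k + (n + 1)] (u m) := by
      rw [Function.iterate_add_apply, Function.iterate_succ_apply']
    rw [h1, show k + (n + 1) = m from by omega]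
    exact hu m
  have hfb : f^[k] (f b) = y := by
    have h1 : f^[k] (f b) = f^[k + (n + 1)] (v m) := by
      rw [Function.iterate_add_apply, Function.iterate_succ_apply']
    rw [h1, show k + (n + 1) = m from by omega]
    exact hv m
  calc Dm f x y = Dm f (f^[k] (f a)) (f^[k] (f b)) := by rw [hfa, hfb]
    _ ≤ Dm f (f a) (f b) := Dm_iter f k _ _
    _ ≤ Dm f (f a) (f x) + Dm f (f x) (f y) + Dm f (f y) (f b) := by
        have := Dm_triangle f (f a) (f x) (f b)
        have := Dm_triangle f (f x) (f y) (f b)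
        linarith
    _ ≤ ε / 2 + Dm f (f x) (f y) + ε / 2 := by
        have h1 : Dm f (f a) (f x) ≤ ε / 2 := (Dm_step f a x).trans (by rwa [Dm_comm] at hxa)
        have h2 : Dm f (f y) (f b) ≤ ε / 2 := (Dm_step f y b).trans hyb
        linarith
    _ = Dm f (f x) (f y) + ε := by ring
end

theorem equicontinuous_surjective_homeo {X : Type*} [MetricSpace X] [CompactSpace X]
    (f : X → X) (hf : Continuous f) (hsurj : Function.Surjective f)
    (heq : ∀ ε > (0 : ℝ), ∃ δ > (0 : ℝ), ∀ x y : X, dist x y ≤ δ →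
      ∀ i : ℕ, dist (f^[i] x) (f^[i] y) ≤ ε) :
    Function.Bijective f ∧
      ∃ g : X → X, Function.LeftInverse g f ∧ Function.RightInverse g f ∧
        Continuous g ∧
        ∀ ε > (0 : ℝ), ∃ δ > (0 : ℝ), ∀ x y : X, dist x y ≤ δ →
          ∀ i : ℕ, dist (g^[i] x) (g^[i] y) ≤ ε := by
  have hinj : Function.Injective f := by
    intro x y hxy
    have h1 : dist x y ≤ Dm f x y := dist_le_Dm f x y
    rw [← Dm_isom hsurj heq x y, hxy, Dm_self] at h1
    exact dist_le_zero.1 h1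
  have hbij : Function.Bijective f := ⟨hinj, hsurj⟩
  let e : X ≃ X := Equiv.ofBijective f hbij
  have he : Continuous e := hf
  let h : X ≃ₜ X := Continuous.homeoOfEquivCompactToT2 (f := e) he
  have hfg : ∀ x, f (e.symm x) = x := fun x => e.apply_symm_apply x
  have hgf : ∀ x, e.symm (f x) = x := fun x => e.symm_apply_apply x
  have hgD : ∀ x y, Dm f (e.symm x) (e.symm y) = Dm f x y := by
    intro x y
    have := Dm_isom hsurj heq (e.symm x) (e.symm y)
    rw [hfg, hfg] at this
    exact this.symm
  have hgDi : ∀ (i : ℕ) (x y : X), Dm f (e.symm^[i] x) (e.symm^[i] y) = Dm f x y := by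
    intro i
    induction i with
    | zero => simp
    | succ n ih =>
      intro x y
      rw [Function.iterate_succ_apply, Function.iterate_succ_apply, ih, hgD]
  refine ⟨hbij, e.symm, hgf, hfg, h.symm.continuous, ?_⟩
  intro ε hε
  obtain ⟨δ, hδ, hδ'⟩ := heq ε hε
  refine ⟨δ, hδ, fun x y hxy i => ?_⟩
  calc dist (e.symm^[i] x) (e.symm^[i] y) ≤ Dm f (e.symm^[i] x) (e.symm^[i] y) :=
        dist_le_Dm f _ _
    _ = Dm f x y := hgDi i x y
    _ ≤ ε := ciSup_le (hδ' x y hxy)
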